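/- Let f(n) satisfy f(n) → ∞ and f(n) = o(log log n), let p = (log n + f(n))/n, and let G ~ G(n,p). Then with high probability, for every pair of disjoint vertex subsets U, W ⊆ V(G) with 10n/log n ≤ |U|, |W| ≤ n/9, one has |N(U) ∩ N(W)| ≥ n/9. -/

import Mathlib

open MeasureTheory Filter

/-- Bernoulli measure on `Bool` with success probability (the truncation to `[0,1]` of) `p`. -/
noncomputable def bernoulliPMF (p : ℝ) : PMF Bool :=
  PMF.bernoulli (min (Real.toNNReal p) 1) (min_le_right _ _)

/-- The Erdős–Rényi measure `G(n,p)`: each potential edge (element of `Sym2 (Fin n)`)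
is present independently with probability `p`. -/
noncomputable def erMeasure (n : ℕ) (p : ℝ) : Measure (Sym2 (Fin n) → Bool) :=
  Measure.pi fun _ => (bernoulliPMF p).toMeasure

instance (n : ℕ) (p : ℝ) : IsProbabilityMeasure (erMeasure n p) := by
  unfold erMeasure; infer_instance

/-- The simple graph on `Fin n` encoded by an edge-indicator function. -/
def graphOfFun {n : ℕ} (f : Sym2 (Fin n) → Bool) : SimpleGraph (Fin n) where
  Adj u v := u ≠ v ∧ f s(u, v) = true
  symm := ⟨fun u v ⟨h1, h2⟩ => ⟨h1.symm, by rwa [Sym2.eq_swap]⟩⟩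
  loopless := ⟨fun u ⟨h1, _⟩ => h1 rfl⟩
/-- The external neighbourhood of a vertex set `U`. -/
def extNbhd {V : Type*} (G : SimpleGraph V) (U : Set V) : Set V :=
  {v | v ∉ U ∧ ∃ u ∈ U, G.Adj u v}

/-- The degree of a vertex. -/
noncomputable def deg {V : Type*} (G : SimpleGraph V) (v : V) : ℕ :=
  (G.neighborSet v).ncard

/-- The number of neighbours of `v` inside the set `S`. -/
noncomputable def degIn {V : Type*} (G : SimpleGraph V) (v : V) (S : Set V) : ℕ :=
  (G.neighborSet v ∩ S).ncard

/-- The number of edges of `G` with one endpoint in `U` and the other in `W`. -/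
noncomputable def edgesBetween {V : Type*} (G : SimpleGraph V) (U W : Set V) : ℕ :=
  {e ∈ G.edgeSet | ∃ u ∈ U, ∃ w ∈ W, e = s(u, w)}.ncard

/-- The number of edges of `G` spanned by `U`. -/
noncomputable def edgesWithin {V : Type*} (G : SimpleGraph V) (U : Set V) : ℕ :=
  {e ∈ G.edgeSet | ∃ u ∈ U, ∃ w ∈ U, e = s(u, w)}.ncard

/-- `Small(G)`: vertices of degree at most `log n / 10`. -/
def smallSet {n : ℕ} (G : SimpleGraph (Fin n)) : Set (Fin n) :=
  {v | (deg G v : ℝ) ≤ Real.log n / 10}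

noncomputable def gammaC : ℝ := 1 / 10000

lemma bern_false {p : ℝ} (hp0 : 0 ≤ p) (hp1 : p ≤ 1) :
    (bernoulliPMF p).toMeasure {false} = ENNReal.ofReal (1 - p) := by
  rw [PMF.toMeasure_apply_singleton _ _ (measurableSet_singleton _)]
  have hmin : min (Real.toNNReal p) 1 = Real.toNNReal p :=
    min_eq_left (Real.toNNReal_le_one.mpr hp1)
  rw [ENNReal.ofReal_sub 1 hp0, ENNReal.ofReal_one]
  simp [bernoulliPMF, PMF.bernoulli_apply, hmin]
  rfl

lemma cyl_measure (n : ℕ) (p : ℝ) (hp0 : 0 ≤ p) (hp1 : p ≤ 1) (F : Finset (Sym2 (Fin n))) :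
    erMeasure n p {fe | ∀ e ∈ F, fe e = false} = ENNReal.ofReal ((1-p)^F.card) := by
  classical
  have hset : {fe : Sym2 (Fin n) → Bool | ∀ e ∈ F, fe e = false}
      = Set.univ.pi (fun e => if e ∈ F then ({false} : Set Bool) else Set.univ) := by
    ext fe
    simp only [Set.mem_setOf_eq, Set.mem_pi, Set.mem_univ, true_implies]
    constructor
    · intro h e
      split_ifs with he
      · simpa using h e he
      · trivial
    · intro h e he
      have := h e
      simp [he] at this
      exact this
  rw [hset]
  unfold erMeasure
  rw [Measure.pi_pi]
  have hfac : ∀ e : Sym2 (Fin n),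
      (bernoulliPMF p).toMeasure (if e ∈ F then ({false}:Set Bool) else Set.univ)
      = if e ∈ F then ENNReal.ofReal (1-p) else 1 := by
    intro e
    split_ifs
    · exact bern_false hp0 hp1
    · exact measure_univ
  simp_rw [hfac]
  rw [Finset.prod_ite_mem, Finset.univ_inter, Finset.prod_const,
      ENNReal.ofReal_pow (by linarith)]

def cylEvent (n : ℕ) (U W S : Finset (Fin n)) (c : Fin n → Bool) : Set (Sym2 (Fin n) → Bool) :=
  {fe | ∀ v ∈ S, ∀ u ∈ (if c v then U else W), fe s(u, v) = false}

def cylF (n : ℕ) (U W S : Finset (Fin n)) (c : Fin n → Bool) : Finset (Sym2 (Fin n)) :=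
  S.biUnion (fun v => (if c v then U else W).image (fun u => s(u, v)))

lemma cylEvent_eq (n : ℕ) (U W S : Finset (Fin n)) (c : Fin n → Bool) :
    cylEvent n U W S c = {fe | ∀ e ∈ cylF n U W S c, fe e = false} := by
  ext fe
  simp only [cylEvent, cylF, Set.mem_setOf_eq, Finset.mem_biUnion, Finset.mem_image]
  constructor
  · rintro h e ⟨v, hv, u, hu, rfl⟩
    exact h v hv u hu
  · intro h v hv u hu
    exact h _ ⟨v, hv, u, hu, rfl⟩

lemma cylF_card (n : ℕ) (U W S : Finset (Fin n)) (c : Fin n → Bool)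
    (hS : ∀ v ∈ S, v ∉ U ∧ v ∉ W) :
    S.card * min U.card W.card ≤ (cylF n U W S c).card := by
  classical
  have hmem : ∀ v : Fin n, ∀ u, u ∈ (if c v then U else W) → u ∈ U ∨ u ∈ W := by
    intro v u hu
    by_cases h : c v
    · left; simpa [h] using hu
    · right; simpa [h] using hu
  have hdisj : ∀ x ∈ S, ∀ y ∈ S, x ≠ y →
      Disjoint ((if c x then U else W).image (fun u => s(u, x)))
        ((if c y then U else W).image (fun u => s(u, y))) := by
    intro x hx y hy hxy
    rw [Finset.disjoint_left]
    intro e he1 he2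
    simp only [Finset.mem_image] at he1 he2
    obtain ⟨u, hu, rfl⟩ := he1
    obtain ⟨u', hu', he⟩ := he2
    rcases Sym2.eq_iff.mp he with ⟨h1, h2⟩ | ⟨h1, h2⟩
    · exact hxy (h2.symm)
    · -- u' = x, so x ∈ U ∨ x ∈ W
      rcases hmem y u' hu' with h | h
      · exact (hS x hx).1 (h1 ▸ h)
      · exact (hS x hx).2 (h1 ▸ h)
  rw [cylF, Finset.card_biUnion hdisj]
  have hcard : ∀ v ∈ S, min U.card W.card ≤ ((if c v then U else W).image (fun u => s(u, v))).card := by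
    intro v hv
    have hinj : Set.InjOn (fun u => s(u, v)) ↑(if c v then U else W) := by
      intro a ha b hb hab
      rcases Sym2.eq_iff.mp hab with ⟨h1, _⟩ | ⟨h1, h2⟩
      · exact h1
      · exfalso
        have hbU := hmem v b (by simpa using hb)
        rcases hbU with h | h
        · exact (hS v hv).1 (h2 ▸ h)
        · exact (hS v hv).2 (h2 ▸ h)
    rw [Finset.card_image_of_injOn hinj]
    by_cases h : c v
    · simpa [h] using min_le_left U.card W.card
    · simpa [h] using min_le_right U.card W.card
  calc S.card * min U.card W.card = ∑ _v ∈ S, min U.card W.card := by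
        rw [Finset.sum_const, smul_eq_mul]
    _ ≤ _ := Finset.sum_le_sum hcard

lemma pow_bound {p : ℝ} (hp0 : 0 ≤ p) (hp1 : p ≤ 1) {a : ℝ} (k : ℕ) (ha : a ≤ p * k) :
    (1-p)^k ≤ Real.exp (-a) := by
  have he : 1 - p ≤ Real.exp (-p) := by linarith [Real.add_one_le_exp (-p)]
  have h1 : (1-p)^k ≤ Real.exp (-p) ^ k := pow_le_pow_left₀ (by linarith) he k
  have h2 : Real.exp (-p) ^ k = Real.exp (-(p * k)) := by
    rw [← Real.exp_nat_mul]; ring_nf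
  have h3 : Real.exp (-(p * k)) ≤ Real.exp (-a) := Real.exp_le_exp.mpr (by linarith)
  calc (1-p)^k ≤ Real.exp (-p) ^ k := h1
    _ = _ := h2
    _ ≤ _ := h3

lemma main_bound (n : ℕ) (p : ℝ) (hp0 : 0 ≤ p) (hp1 : p ≤ 1)
    (hlog : 0 < Real.log n) (h10 : 10 ≤ p * (10 * n / Real.log n)) :
    erMeasure n p
      {fe | ∀ U W : Set (Fin n), Disjoint U W →
          10 * n / Real.log n ≤ (U.ncard : ℝ) → (U.ncard : ℝ) ≤ n / 9 →
          10 * n / Real.log n ≤ (W.ncard : ℝ) → (W.ncard : ℝ) ≤ n / 9 →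
          (n : ℝ) / 9 ≤ ((extNbhd (graphOfFun fe) U ∩ extNbhd (graphOfFun fe) W).ncard : ℝ)}ᶜ
      ≤ (2:ENNReal)^(4*n) * ENNReal.ofReal (Real.exp (-(20 * n)/3)) := by
  classical
  set I : Finset (Finset (Fin n) × Finset (Fin n) × Finset (Fin n) × (Fin n → Bool)) :=
    Finset.univ.filter (fun t =>
      (2*(n:ℝ))/3 ≤ t.2.2.1.card ∧ (10*n/Real.log n ≤ (t.1.card : ℝ)) ∧
      (10*n/Real.log n ≤ (t.2.1.card : ℝ)) ∧ ∀ v ∈ t.2.2.1, v ∉ t.1 ∧ v ∉ t.2.1) with hI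
  -- cover
  have hcover : {fe : Sym2 (Fin n) → Bool | ∀ U W : Set (Fin n), Disjoint U W →
          10 * n / Real.log n ≤ (U.ncard : ℝ) → (U.ncard : ℝ) ≤ n / 9 →
          10 * n / Real.log n ≤ (W.ncard : ℝ) → (W.ncard : ℝ) ≤ n / 9 →
          (n : ℝ) / 9 ≤ ((extNbhd (graphOfFun fe) U ∩ extNbhd (graphOfFun fe) W).ncard : ℝ)}ᶜ
      ⊆ ⋃ t ∈ I, cylEvent n t.1 t.2.1 t.2.2.1 t.2.2.2 := by
    intro fe hfe
    simp only [Set.mem_compl_iff, Set.mem_setOf_eq] at hfe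
    push_neg at hfe
    obtain ⟨U, W, hdisj, hU1, hU2, hW1, hW2, hX⟩ := hfe
    set X := extNbhd (graphOfFun fe) U ∩ extNbhd (graphOfFun fe) W with hXdef
    have hXlt : (X.ncard : ℝ) < n / 9 := hX
    set U' : Finset (Fin n) := (Set.toFinite U).toFinset with hU'
    set W' : Finset (Fin n) := (Set.toFinite W).toFinset with hW'
    set S0 : Set (Fin n) := {v | v ∉ U ∧ v ∉ W ∧ v ∉ X} with hS0
    set S' : Finset (Fin n) := (Set.toFinite S0).toFinset with hS'
    set c : Fin n → Bool := fun v => decide (∀ u ∈ U', fe s(u,v) = false) with hc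
    have hU'card : (U'.card : ℝ) = U.ncard := by
      rw [Set.ncard_eq_toFinset_card U (Set.toFinite U)]
    have hW'card : (W'.card : ℝ) = W.ncard := by
      rw [Set.ncard_eq_toFinset_card W (Set.toFinite W)]
    have hS'card : S'.card = S0.ncard := (Set.ncard_eq_toFinset_card S0 (Set.toFinite S0)).symm
    have hmemU' : ∀ u, u ∈ U' ↔ u ∈ U := fun u => Set.Finite.mem_toFinset _
    have hmemW' : ∀ u, u ∈ W' ↔ u ∈ W := fun u => Set.Finite.mem_toFinset _
    have hmemS' : ∀ u, u ∈ S' ↔ u ∈ S0 := fun u => Set.Finite.mem_toFinset _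
    -- size of S0
    have hS0card : (2*(n:ℝ))/3 ≤ S0.ncard := by
      have hsub : (Set.univ : Set (Fin n)) ⊆ S0 ∪ (U ∪ (W ∪ X)) := by
        intro v _
        by_cases h1 : v ∈ U
        · exact Or.inr (Or.inl h1)
        by_cases h2 : v ∈ W
        · exact Or.inr (Or.inr (Or.inl h2))
        by_cases h3 : v ∈ X
        · exact Or.inr (Or.inr (Or.inr h3))
        · exact Or.inl ⟨h1, h2, h3⟩
      have h0 : (Set.univ : Set (Fin n)).ncard = n := by
        rw [Set.ncard_univ, Nat.card_eq_fintype_card, Fintype.card_fin]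
      have h1 : n ≤ (S0 ∪ (U ∪ (W ∪ X))).ncard := by
        have := Set.ncard_le_ncard hsub (Set.toFinite _)
        rwa [h0] at this
      have h2 := Set.ncard_union_le S0 (U ∪ (W ∪ X))
      have h3 := Set.ncard_union_le U (W ∪ X)
      have h4 := Set.ncard_union_le W X
      have hn : (n:ℝ) ≤ (S0.ncard : ℝ) + U.ncard + W.ncard + X.ncard := by
        have hnat : n ≤ S0.ncard + U.ncard + W.ncard + X.ncard := by omega
        exact_mod_cast hnat
      linarith
    have hmemI : (U', W', S', c) ∈ I := by
      rw [hI, Finset.mem_filter]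
      refine ⟨Finset.mem_univ _, ?_, ?_, ?_, ?_⟩
      · rw [hS'card]; exact_mod_cast hS0card
      · rw [hU'card]; exact hU1
      · rw [hW'card]; exact hW1
      · intro v hv
        have hv0 := (hmemS' v).mp hv
        exact ⟨fun h => hv0.1 ((hmemU' v).mp h), fun h => hv0.2.1 ((hmemW' v).mp h)⟩
    refine Set.mem_iUnion₂.mpr ⟨(U', W', S', c), hmemI, ?_⟩
    -- fe in the cylinder event
    intro v hv u hu
    have hv0 := (hmemS' v).mp hv
    by_cases hcv : c v
    · rw [if_pos hcv] at hu
      have := of_decide_eq_true hcv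
      exact this u hu
    · rw [if_neg hcv] at hu
      -- c v = false : there is an edge from v to U, so v ∈ extNbhd U, hence v ∉ extNbhd W
      have hnot : ¬ (∀ u ∈ U', fe s(u,v) = false) := by
        intro h; exact hcv (decide_eq_true h)
      push_neg at hnot
      obtain ⟨u0, hu0, hfeu0⟩ := hnot
      have hu0U : u0 ∈ U := (hmemU' u0).mp hu0
      have hadj : (graphOfFun fe).Adj u0 v := by
        refine (⟨fun h => hv0.1 (h ▸ hu0U), ?_⟩ : u0 ≠ v ∧ fe s(u0, v) = true)
        cases h : fe s(u0, v)
        · exact absurd h hfeu0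
        · rfl
      have hvNU : v ∈ extNbhd (graphOfFun fe) U := ⟨hv0.1, u0, hu0U, hadj⟩
      have hvnotNW : v ∉ extNbhd (graphOfFun fe) W := fun h => hv0.2.2 ⟨hvNU, h⟩
      -- u ∈ W', show fe s(u,v) = false
      have huW : u ∈ W := (hmemW' u).mp hu
      by_contra hne
      have hfet : fe s(u, v) = true := by
        cases h : fe s(u, v)
        · exact absurd h hne
        · rfl
      exact hvnotNW ⟨hv0.2.1, u, huW, (⟨fun h => hv0.2.1 (h ▸ huW), hfet⟩ : u ≠ v ∧ fe s(u, v) = true)⟩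
  -- union bound
  have hmeas := (measure_mono (μ := erMeasure n p) hcover).trans
    (measure_biUnion_finset_le (μ := erMeasure n p) I
      (fun t => cylEvent n t.1 t.2.1 t.2.2.1 t.2.2.2))
  refine hmeas.trans ?_
  have hterm : ∀ t ∈ I, erMeasure n p (cylEvent n t.1 t.2.1 t.2.2.1 t.2.2.2)
      ≤ ENNReal.ofReal (Real.exp (-(20 * n)/3)) := by
    intro t ht
    rw [hI, Finset.mem_filter] at ht
    obtain ⟨-, hScard, hUcard, hWcard, hSdisj⟩ := ht
    rw [cylEvent_eq, cyl_measure n p hp0 hp1]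
    apply ENNReal.ofReal_le_ofReal
    rw [neg_div]
    apply pow_bound hp0 hp1
    have hF := cylF_card n t.1 t.2.1 t.2.2.1 t.2.2.2 hSdisj
    have hK : (10:ℝ) ≤ p * ((min t.1.card t.2.1.card : ℕ) : ℝ) := by
      have hmin : (10*n/Real.log n : ℝ) ≤ ((min t.1.card t.2.1.card : ℕ) : ℝ) := by
        rw [Nat.cast_min]; exact le_min hUcard hWcard
      calc (10:ℝ) ≤ p * (10*n/Real.log n) := h10
        _ ≤ _ := mul_le_mul_of_nonneg_left hmin hp0
    have hFcast : ((t.2.2.1.card : ℝ) * ((min t.1.card t.2.1.card : ℕ) : ℝ))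
        ≤ ((cylF n t.1 t.2.1 t.2.2.1 t.2.2.2).card : ℝ) := by
      rw [← Nat.cast_mul]; exact_mod_cast hF
    have hS0 : (0:ℝ) ≤ (t.2.2.1.card : ℝ) := Nat.cast_nonneg _
    have key : (2*(n:ℝ)/3) * 10 ≤ (t.2.2.1.card : ℝ) * (p * ((min t.1.card t.2.1.card : ℕ) : ℝ)) :=
      mul_le_mul hScard hK (by norm_num) hS0
    nlinarith [mul_le_mul_of_nonneg_left hFcast hp0]
  calc ∑ t ∈ I, erMeasure n p (cylEvent n t.1 t.2.1 t.2.2.1 t.2.2.2)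
      ≤ ∑ _t ∈ I, ENNReal.ofReal (Real.exp (-(20 * n)/3)) := Finset.sum_le_sum hterm
    _ = I.card * ENNReal.ofReal (Real.exp (-(20 * n)/3)) := by
        rw [Finset.sum_const, nsmul_eq_mul]
    _ ≤ (2:ENNReal)^(4*n) * ENNReal.ofReal (Real.exp (-(20 * n)/3)) := by
        apply mul_le_mul_left
        have hIcard : I.card ≤ 2^(4*n) := by
          calc I.card ≤ (Finset.univ : Finset (Finset (Fin n) × Finset (Fin n) × Finset (Fin n) × (Fin n → Bool))).card :=
                Finset.card_filter_le _ _
            _ = 2^(4*n) := by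
                rw [Finset.card_univ]
                simp [Fintype.card_prod, Fintype.card_finset, Fintype.card_fun, Fintype.card_fin]
                ring
        calc (I.card : ENNReal) ≤ ((2^(4*n) : ℕ) : ENNReal) := Nat.cast_le.mpr hIcard
          _ = (2:ENNReal)^(4*n) := by push_cast; ring


open Asymptotics in
/-- **(P7)**: whp for all disjoint `U,W` with `10n/log n ≤ |U|,|W| ≤ n/9` one has `|N(U) ∩ N(W)| ≥ n/9`. -/
theorem gnp_common_neighbourhoods (f : ℕ → ℝ) (hf : Tendsto f atTop atTop)
    (hf' : f =o[atTop] fun n : ℕ => Real.log (Real.log n)) :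
    Tendsto (fun n : ℕ => erMeasure n ((Real.log n + f n) / n)
        {fe | ∀ U W : Set (Fin n), Disjoint U W →
          10 * n / Real.log n ≤ (U.ncard : ℝ) → (U.ncard : ℝ) ≤ n / 9 →
          10 * n / Real.log n ≤ (W.ncard : ℝ) → (W.ncard : ℝ) ≤ n / 9 →
          (n : ℝ) / 9 ≤ ((extNbhd (graphOfFun fe) U ∩ extNbhd (graphOfFun fe) W).ncard : ℝ)})
      atTop (nhds 1) := by
  -- the tail bound function
  have hBtend : Tendsto (fun n : ℕ =>
      ENNReal.ofReal (Real.exp (((4*n : ℕ) : ℝ) * Real.log 2 + -(20*(n:ℝ))/3))) atTop (nhds 0) := by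
    have hc : (4 * Real.log 2 + -(20:ℝ)/3) < 0 := by
      nlinarith [Real.log_two_lt_d9]
    have h1 : Tendsto (fun n : ℕ => ((n:ℝ)) * (4 * Real.log 2 + -(20:ℝ)/3)) atTop atBot :=
      Tendsto.atTop_mul_const_of_neg hc tendsto_natCast_atTop_atTop
    have h2 : Tendsto (fun n : ℕ => Real.exp ((n:ℝ) * (4 * Real.log 2 + -(20:ℝ)/3))) atTop (nhds 0) :=
      Real.tendsto_exp_atBot.comp h1
    have h3 := ENNReal.tendsto_ofReal (a := 0) h2
    rw [ENNReal.ofReal_zero] at h3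
    apply h3.congr
    intro n
    congr 1
    push_cast
    ring
  -- eventual hypotheses
  have ev1 : ∀ᶠ n : ℕ in atTop, 0 ≤ f n := hf.eventually_ge_atTop 0
  have ev2 : ∀ᶠ n : ℕ in atTop, ‖f n‖ ≤ 1 * ‖Real.log (Real.log n)‖ := hf'.bound one_pos
  have ev3 : ∀ᶠ n : ℕ in atTop, ‖Real.log (n:ℝ)‖ ≤ 1/2 * ‖(n:ℝ)‖ :=
    tendsto_natCast_atTop_atTop.eventually (Real.isLittleO_log_id_atTop.bound (by norm_num : (0:ℝ) < 1/2))
  have ev4 : ∀ᶠ n : ℕ in atTop, 1 ≤ Real.log n :=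
    (Real.tendsto_log_atTop.comp tendsto_natCast_atTop_atTop).eventually_ge_atTop 1
  have ev5 : ∀ᶠ n : ℕ in atTop, 1 ≤ n := eventually_ge_atTop 1
  -- the measure of the bad set tends to zero
  have hbad : Tendsto (fun n : ℕ => erMeasure n ((Real.log n + f n) / n)
      {fe | ∀ U W : Set (Fin n), Disjoint U W →
          10 * n / Real.log n ≤ (U.ncard : ℝ) → (U.ncard : ℝ) ≤ n / 9 →
          10 * n / Real.log n ≤ (W.ncard : ℝ) → (W.ncard : ℝ) ≤ n / 9 →
          (n : ℝ) / 9 ≤ ((extNbhd (graphOfFun fe) U ∩ extNbhd (graphOfFun fe) W).ncard : ℝ)}ᶜ)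
      atTop (nhds 0) := by
    apply tendsto_of_tendsto_of_tendsto_of_le_of_le' tendsto_const_nhds hBtend
    · exact Eventually.of_forall (fun _ => zero_le)
    · filter_upwards [ev1, ev2, ev3, ev4, ev5] with n h1 h2 h3 h4 h5
      have hn0 : (0:ℝ) < n := by exact_mod_cast h5
      have hL : (1:ℝ) ≤ Real.log n := h4
      have hLpos : (0:ℝ) < Real.log n := lt_of_lt_of_le one_pos h4
      have hfle : f n ≤ Real.log n := by
        have hll : Real.log (Real.log n) ≤ Real.log n := by
          calc Real.log (Real.log n) ≤ Real.log n - 1 := Real.log_le_sub_one_of_pos hLpos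
            _ ≤ Real.log n := by linarith
        have habs : |f n| ≤ |Real.log (Real.log n)| := by
          simpa [Real.norm_eq_abs] using h2
        have : |Real.log (Real.log n)| = Real.log (Real.log n) := by
          rw [abs_of_nonneg]
          exact Real.log_nonneg hL
        calc f n ≤ |f n| := le_abs_self _
          _ ≤ Real.log (Real.log n) := by rw [← this]; exact habs
          _ ≤ Real.log n := hll
      have hlogn : Real.log n ≤ n / 2 := by
        have := h3
        rw [Real.norm_eq_abs, Real.norm_eq_abs, abs_of_nonneg (by positivity : (0:ℝ) ≤ Real.log n),
          abs_of_nonneg hn0.le] at this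
        linarith
      have hp0 : 0 ≤ (Real.log n + f n) / n := by positivity
      have hp1 : (Real.log n + f n) / n ≤ 1 := by
        rw [div_le_one hn0]
        linarith
      have h10 : 10 ≤ (Real.log n + f n) / n * (10 * n / Real.log n) := by
        have heq : (Real.log n + f n) / n * (10 * n / Real.log n)
            = 10 * (Real.log n + f n) / Real.log n := by
          field_simp
        rw [heq, le_div_iff₀ hLpos]
        linarith
      have hb := main_bound n ((Real.log n + f n) / n) hp0 hp1 hLpos h10
      refine hb.trans (le_of_eq ?_)
      rw [Real.exp_add, Real.exp_nat_mul, Real.exp_log two_pos,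
        ENNReal.ofReal_mul (by positivity), ENNReal.ofReal_pow (by norm_num : (0:ℝ) ≤ 2)]
      norm_num
  -- conclude
  have hcompl : ∀ n : ℕ, erMeasure n ((Real.log n + f n) / n)
      {fe | ∀ U W : Set (Fin n), Disjoint U W →
          10 * n / Real.log n ≤ (U.ncard : ℝ) → (U.ncard : ℝ) ≤ n / 9 →
          10 * n / Real.log n ≤ (W.ncard : ℝ) → (W.ncard : ℝ) ≤ n / 9 →
          (n : ℝ) / 9 ≤ ((extNbhd (graphOfFun fe) U ∩ extNbhd (graphOfFun fe) W).ncard : ℝ)}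
      = 1 - erMeasure n ((Real.log n + f n) / n)
      {fe | ∀ U W : Set (Fin n), Disjoint U W →
          10 * n / Real.log n ≤ (U.ncard : ℝ) → (U.ncard : ℝ) ≤ n / 9 →
          10 * n / Real.log n ≤ (W.ncard : ℝ) → (W.ncard : ℝ) ≤ n / 9 →
          (n : ℝ) / 9 ≤ ((extNbhd (graphOfFun fe) U ∩ extNbhd (graphOfFun fe) W).ncard : ℝ)}ᶜ := by
    intro n
    rw [← prob_compl_eq_one_sub (Set.to_countable _).measurableSet, compl_compl]
  have := ENNReal.Tendsto.sub (tendsto_const_nhds (x := (1:ENNReal))) hbad (Or.inl (by simp))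
  rw [tsub_zero] at this
  exact this.congr (fun n => (hcompl n).symm)
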